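/- Let φ(z) = (az+b)/(cz+d) (a,b,c,d ∈ ℂ, ad−bc ≠ 0) be a linear fractional self-map of 𝔻 having a fixed point on the unit circle ∂𝔻, let σ(z) = (conj(a)·z − conj(c))/(−conj(b)·z + conj(d)), and let ψ(z) = K_{σ(0)}(z). Then the weighted composition operator W_{ψ,φ} is normal on H² if and only if |b| = |c|. -/

import Mathlib

open scoped ComplexConjugate InnerProductSpace ENNReal NNReal
open Complex Metric

noncomputable section

abbrev H2 : Type := lp (fun _ : ℕ => ℂ) 2

namespace H2

/-- Evaluation of an element of `H²` (given by its sequence of Taylor coefficients)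
at a point `z` of the unit disk: `f(z) = ∑ aₙ zⁿ`. -/
def eval (f : H2) (z : ℂ) : ℂ := ∑' n : ℕ, (f : ∀ _ : ℕ, ℂ) n * z ^ n

/-- The Szegő kernel function `K_w(z) = 1/(1 - conj w * z)`. -/
def ker (w z : ℂ) : ℂ := (1 - conj w * z)⁻¹

lemma kernel_memℓp (w : ℂ) (hw : ‖w‖ < 1) :
    Memℓp (fun n : ℕ => (conj w) ^ n) 2 := by
  apply memℓp_gen
  have hsum : Summable (fun n : ℕ => (‖w‖ ^ 2) ^ n) :=
    summable_geometric_of_lt_one (by positivity) (by nlinarith [norm_nonneg w])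
  refine hsum.congr fun n => ?_
  have h2 : ((2 : ℝ≥0∞).toReal) = ((2 : ℕ) : ℝ) := by simp
  rw [h2, Real.rpow_natCast]
  simp [norm_pow, ← pow_mul, Nat.mul_comm]

/-- The reproducing kernel of `H²` at `w` in the unit disk, as an element of `H²`. -/
def kernel (w : ℂ) : H2 :=
  if hw : ‖w‖ < 1 then ⟨fun n : ℕ => (conj w) ^ n, kernel_memℓp w hw⟩ else 0

/-- `T` is the composition operator `C_φ` on `H²`. -/
def IsCompOp (φ : ℂ → ℂ) (T : H2 →L[ℂ] H2) : Prop :=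
  ∀ f : H2, ∀ z : ℂ, ‖z‖ < 1 → eval (T f) z = eval f (φ z)

/-- `W` is the weighted composition operator `W_{ψ,φ}` on `H²`. -/
def IsWCompOp (ψ φ : ℂ → ℂ) (W : H2 →L[ℂ] H2) : Prop :=
  ∀ f : H2, ∀ z : ℂ, ‖z‖ < 1 → eval (W f) z = ψ z * eval f (φ z)

/-- A conjugation on `H²`: a conjugate-linear involution satisfying `⟪Cx, Cy⟫ = ⟪y, x⟫`. -/
structure IsConjugation (C : H2 → H2) : Prop where
  map_add : ∀ x y : H2, C (x + y) = C x + C y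
  map_smul : ∀ (c : ℂ) (x : H2), C (c • x) = conj c • C x
  invol : ∀ x : H2, C (C x) = x
  inner_conj : ∀ x y : H2, ⟪C x, C y⟫_ℂ = ⟪y, x⟫_ℂ

/-- `T` is `C`-normal: `C T* T C = T T*`. -/
def CNormal (C : H2 → H2) (T : H2 →L[ℂ] H2) : Prop :=
  ∀ x : H2, C ((ContinuousLinearMap.adjoint T) (T (C x)))
      = T ((ContinuousLinearMap.adjoint T) x)

/-- `T` is a normal operator: `T* T = T T*`. -/
def IsNormalOp (T : H2 →L[ℂ] H2) : Prop :=
  (ContinuousLinearMap.adjoint T).comp T = T.comp (ContinuousLinearMap.adjoint T)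

/-- `T` is a unitary operator. -/
def IsUnitaryOp (T : H2 →L[ℂ] H2) : Prop :=
  T.comp (ContinuousLinearMap.adjoint T) = ContinuousLinearMap.id ℂ H2 ∧
  (ContinuousLinearMap.adjoint T).comp T = ContinuousLinearMap.id ℂ H2

/-- `C` is the conjugation `J_μ` on `H²`: `(J_μ f)(z) = conj (f (μ * conj z))`. -/
def IsJmu (μ : ℂ) (C : H2 → H2) : Prop :=
  ∀ f : H2, ∀ z : ℂ, ‖z‖ < 1 → eval (C f) z = conj (eval f (μ * conj z))

/-- `ξ_p(z) = √(1-|p|²) / (1 - conj p * z)`. -/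
def xi (p z : ℂ) : ℂ := (Real.sqrt (1 - ‖p‖ ^ 2) : ℂ) / (1 - conj p * z)

/-- `τ_p(z) = λ (p - z) / (1 - conj p * z)`. -/
def tau (p lam z : ℂ) : ℂ := lam * (p - z) / (1 - conj p * z)

/-- `C` is the conjugation `J W_{ξ_p, τ_p}` on `H²`:
`(C f)(z) = conj (ξ_p(conj z) * f (τ_p (conj z)))`. -/
def IsJW (p lam : ℂ) (C : H2 → H2) : Prop :=
  ∀ f : H2, ∀ z : ℂ, ‖z‖ < 1 →
    eval (C f) z = conj (xi p (conj z) * eval f (tau p lam (conj z)))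

end H2

-- ===== auxiliary material (added for the proof) =====

lemma coeff_zero_of_tsum_zero' (c : ℕ → ℂ) (C ρ r : ℝ) (hρ : 0 < ρ)
    (hb : ∀ n, ‖c n‖ ≤ C * ρ ^ n) (hr : 0 < r)
    (h : ∀ u : ℂ, ‖u‖ < r → ∑' n, c n * u ^ n = 0) : ∀ n, c n = 0 := by
  have hC : 0 ≤ C := by have := (norm_nonneg (c 0)).trans (hb 0); simpa using this
  set r' : ℝ := min r (1 / (2 * ρ)) with hr'
  have hr'0 : 0 < r' := lt_min hr (by positivity)
  intro n
  induction n using Nat.strong_induction_on with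
  | _ n ih =>
  have key : ∀ ε : ℝ, 0 < ε → ε < r' → ‖c n‖ ≤ (2 * C * ρ ^ (n + 1)) * ε := by
    intro ε hε hεr'
    have hεsolve : ρ * ε ≤ 1 / 2 := by
      have h1 : ε ≤ 1 / (2 * ρ) := le_of_lt (lt_of_lt_of_le hεr' (min_le_right _ _))
      have h2 : ρ * ε ≤ ρ * (1 / (2 * ρ)) := by nlinarith
      have h3 : ρ * (1 / (2 * ρ)) = 1 / 2 := by
        rw [mul_one_div, div_eq_div_iff (by positivity) (by norm_num : (2:ℝ) ≠ 0)]; ring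
      linarith
    set u : ℂ := (ε : ℂ) with hu
    have hun : ‖u‖ = ε := by simp [hu, abs_of_pos hε]
    have hbound : ∀ m, ‖c m * u ^ m‖ ≤ C * (ρ * ε) ^ m := by
      intro m
      rw [norm_mul, norm_pow, hun, mul_pow]
      calc ‖c m‖ * ε ^ m ≤ (C * ρ ^ m) * ε ^ m := by
            have := hb m; nlinarith [pow_nonneg hε.le m]
        _ = C * (ρ ^ m * ε ^ m) := by ring
    have hgeo : Summable (fun m : ℕ => C * (ρ * ε) ^ m) := by
      apply Summable.mul_left
      apply summable_geometric_of_lt_one (by positivity)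
      linarith
    have hsum : Summable (fun m => c m * u ^ m) :=
      Summable.of_norm_bounded hgeo hbound
    have hzero : ∑' m, c m * u ^ m = 0 :=
      h u (by rw [hun]; exact lt_of_lt_of_le hεr' (min_le_left _ _))
    have hsplit := Summable.sum_add_tsum_nat_add (f := fun m => c m * u ^ m) (n + 1) hsum
    have hfin : ∑ i ∈ Finset.range (n + 1), c i * u ^ i = c n * u ^ n := by
      rw [Finset.sum_eq_single n]
      · intro i hi hine
        rw [ih i (lt_of_le_of_ne (Nat.lt_succ_iff.mp (Finset.mem_range.mp hi)) hine)]
        ring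
      · intro hn; exact absurd (Finset.self_mem_range_succ n) hn
    have htail : ‖∑' m : ℕ, c (m + (n + 1)) * u ^ (m + (n + 1))‖
        ≤ 2 * (C * (ρ * ε) ^ (n + 1)) := by
      have h1 : ∀ m : ℕ, ‖c (m + (n + 1)) * u ^ (m + (n + 1))‖ ≤
          (C * (ρ * ε) ^ (n + 1)) * (1 / 2) ^ m := by
        intro m
        calc ‖c (m + (n + 1)) * u ^ (m + (n + 1))‖ ≤ C * (ρ * ε) ^ (m + (n + 1)) :=
              hbound _
          _ = (C * (ρ * ε) ^ (n + 1)) * (ρ * ε) ^ m := by ring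
          _ ≤ (C * (ρ * ε) ^ (n + 1)) * (1 / 2) ^ m := by
              have h2 : (ρ * ε) ^ m ≤ (1 / 2) ^ m :=
                pow_le_pow_left₀ (by positivity) hεsolve m
              have h3 : 0 ≤ C * (ρ * ε) ^ (n + 1) := by positivity
              nlinarith
      calc ‖∑' m : ℕ, c (m + (n + 1)) * u ^ (m + (n + 1))‖
          ≤ ∑' m : ℕ, (C * (ρ * ε) ^ (n + 1)) * (1 / 2) ^ m := by
            apply tsum_of_norm_bounded _ h1
            exact ((summable_geometric_of_lt_one (by norm_num) (by norm_num)).mul_left _).hasSum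
        _ = (C * (ρ * ε) ^ (n + 1)) * ((1 : ℝ) - 1/2)⁻¹ := by
            rw [tsum_mul_left, tsum_geometric_of_lt_one (by norm_num) (by norm_num)]
        _ = 2 * (C * (ρ * ε) ^ (n + 1)) := by norm_num; ring
    have heq : ‖c n‖ * ε ^ n ≤ 2 * (C * (ρ * ε) ^ (n + 1)) := by
      have h0 : c n * u ^ n = - ∑' m : ℕ, c (m + (n + 1)) * u ^ (m + (n + 1)) := by
        rw [hfin, hzero] at hsplit
        linear_combination hsplit
      calc ‖c n‖ * ε ^ n = ‖c n * u ^ n‖ := by rw [norm_mul, norm_pow, hun]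
        _ = ‖∑' m : ℕ, c (m + (n + 1)) * u ^ (m + (n + 1))‖ := by rw [h0, norm_neg]
        _ ≤ _ := htail
    have hεn : 0 < ε ^ n := pow_pos hε n
    have hrw : 2 * (C * (ρ * ε) ^ (n + 1)) = ((2 * C * ρ ^ (n + 1)) * ε) * ε ^ n := by ring
    rw [hrw] at heq
    exact le_of_mul_le_mul_right heq hεn
  have hnorm : ‖c n‖ ≤ 0 := by
    by_contra hpos
    push_neg at hpos
    set K : ℝ := 2 * C * ρ ^ (n + 1) with hK
    have hK0 : 0 ≤ K := by positivity
    set ε : ℝ := min (r' / 2) (‖c n‖ / (2 * (K + 1))) with hε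
    have hε0 : 0 < ε := lt_min (by linarith) (by positivity)
    have hεr' : ε < r' := lt_of_le_of_lt (min_le_left _ _) (by linarith)
    have h1 : ‖c n‖ ≤ K * ε := key ε hε0 hεr'
    have h2 : ε ≤ ‖c n‖ / (2 * (K + 1)) := min_le_right _ _
    have h3 : K * ε ≤ (K + 1) * (‖c n‖ / (2 * (K + 1))) := by
      apply mul_le_mul (by linarith) h2 hε0.le (by linarith)
    have h4 : (K + 1) * (‖c n‖ / (2 * (K + 1))) = ‖c n‖ / 2 := by
      field_simp
    linarith
  exact norm_le_zero_iff.mp hnorm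

lemma mul_conj_norm' (z : ℂ) : z * conj z = ((‖z‖ ^ 2 : ℝ) : ℂ) := by
  rw [Complex.mul_conj, Complex.normSq_eq_norm_sq]

lemma algE' (a b c d ζ : ℂ) (hζ : ζ * conj ζ = 1) (hq : a * ζ + b = ζ * (c * ζ + d))
    (hbb : b * conj b = c * conj c) :
    conj c * (a - d) + b * (conj a - conj d) = 0 := by
  have hb : b = c * ζ ^ 2 + d * ζ - a * ζ := by linear_combination hq
  subst hb
  have hbb' : (c * ζ ^ 2 + d * ζ - a * ζ) *
      (conj c * conj ζ ^ 2 + conj d * conj ζ - conj a * conj ζ) = c * conj c := by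
    have hcj : conj (c * ζ ^ 2 + d * ζ - a * ζ)
        = conj c * conj ζ ^ 2 + conj d * conj ζ - conj a * conj ζ := by
      simp [map_add, map_sub, map_mul, map_pow]
    rw [← hcj]; exact hbb
  linear_combination (-(conj c * (a - d)) + ζ * ((c * ζ - (a - d)) *
    (conj c * conj ζ - (conj a - conj d)) + c * conj c)) * hζ - ζ * hbb'

namespace H2

lemma coeff_norm_le (f : H2) (n : ℕ) : ‖(f : ∀ _ : ℕ, ℂ) n‖ ≤ ‖f‖ :=
  lp.norm_apply_le_norm two_ne_zero f n

lemma sq_summable (f : H2) : Summable (fun n => ‖(f : ∀ _ : ℕ, ℂ) n‖ ^ (2:ℝ)) := by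
  have := lp.memℓp f
  rw [memℓp_gen_iff (p := 2) (by norm_num)] at this
  simpa using this

lemma summable_eval (f : H2) {z : ℂ} (hz : ‖z‖ < 1) :
    Summable (fun n => (f : ∀ _ : ℕ, ℂ) n * z ^ n) := by
  apply Summable.of_norm_bounded (g := fun n => ‖f‖ * ‖z‖ ^ n)
  · exact (summable_geometric_of_lt_one (norm_nonneg z) hz).mul_left _
  · intro n
    rw [norm_mul, norm_pow]
    exact mul_le_mul_of_nonneg_right (coeff_norm_le f n) (by positivity)

lemma kernel_coeff {w : ℂ} (hw : ‖w‖ < 1) (n : ℕ) :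
    (kernel w : ∀ _ : ℕ, ℂ) n = (conj w) ^ n := by
  rw [kernel, dif_pos hw]

lemma eval_kernel {w z : ℂ} (hw : ‖w‖ < 1) (hz : ‖z‖ < 1) :
    eval (kernel w) z = (1 - conj w * z)⁻¹ := by
  have hq : ‖conj w * z‖ < 1 := by
    rw [norm_mul, RCLike.norm_conj]
    nlinarith [norm_nonneg w, norm_nonneg z]
  rw [eval]
  have hcong : ∀ n : ℕ, (kernel w : ∀ _ : ℕ, ℂ) n * z ^ n = (conj w * z) ^ n := by
    intro n; rw [kernel_coeff hw, mul_pow]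
  rw [tsum_congr hcong, tsum_geometric_of_norm_lt_one hq]

lemma inner_kernel {w : ℂ} (hw : ‖w‖ < 1) (f : H2) :
    ⟪kernel w, f⟫_ℂ = eval f w := by
  have hdef : ⟪kernel w, f⟫_ℂ
      = ∑' n, conj ((kernel w : ∀ _ : ℕ, ℂ) n) * (f : ∀ _ : ℕ, ℂ) n := by
    rw [lp.inner_eq_tsum]; exact tsum_congr fun n => RCLike.inner_apply' _ _
  rw [hdef, eval]
  apply tsum_congr
  intro n
  rw [kernel_coeff hw, ← map_pow, Complex.conj_conj]
  ring

lemma eval_eq_inner {w : ℂ} (hw : ‖w‖ < 1) (f : H2) : eval f w = ⟪kernel w, f⟫_ℂ :=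
  (inner_kernel hw f).symm

lemma ext_eval {f g : H2} (h : ∀ z : ℂ, ‖z‖ < 1 → eval f z = eval g z) : f = g := by
  apply lp.ext
  funext n
  have key := coeff_zero_of_tsum_zero' (fun n => (f : ∀ _ : ℕ, ℂ) n - (g : ∀ _ : ℕ, ℂ) n)
    (‖f‖ + ‖g‖) 1 1 one_pos
    (fun n => by
      simpa using (norm_sub_le _ _).trans (add_le_add (coeff_norm_le f n) (coeff_norm_le g n)))
    one_pos
    (fun u hu => by
      have h1 := summable_eval f hu
      have h2 := summable_eval g hu
      have hsub : ∑' n, ((f : ∀ _ : ℕ, ℂ) n - (g : ∀ _ : ℕ, ℂ) n) * u ^ n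
          = eval f u - eval g u := by
        rw [eval, eval, ← Summable.tsum_sub h1 h2]
        apply tsum_congr; intro n; ring
      rw [hsub, h u hu, sub_self]) n
  exact sub_eq_zero.mp (by simpa using key)

lemma coeff_geom (f : H2) (γ q : ℂ)
    (h : ∀ u : ℂ, ‖u‖ < 1 → ‖q * u‖ < 1 → eval f u = γ * (1 - q * u)⁻¹) :
    ∀ n, (f : ∀ _ : ℕ, ℂ) n = γ * q ^ n := by
  have hr : (0:ℝ) < min 1 (‖q‖ + 1)⁻¹ := lt_min one_pos (by positivity)
  intro n
  have key := coeff_zero_of_tsum_zero' (fun n => (f : ∀ _ : ℕ, ℂ) n - γ * q ^ n)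
    (‖f‖ + ‖γ‖) (‖q‖ + 1) (min 1 (‖q‖ + 1)⁻¹) (by positivity)
    (fun n => by
      have h1 : (1:ℝ) ≤ (‖q‖ + 1) ^ n := one_le_pow₀ (by linarith [norm_nonneg q])
      have h2 : ‖q‖ ^ n ≤ (‖q‖ + 1) ^ n := pow_le_pow_left₀ (norm_nonneg q) (by linarith) n
      have h3 := coeff_norm_le f n
      calc ‖(f : ∀ _ : ℕ, ℂ) n - γ * q ^ n‖
          ≤ ‖(f : ∀ _ : ℕ, ℂ) n‖ + ‖γ * q ^ n‖ := norm_sub_le _ _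
        _ = ‖(f : ∀ _ : ℕ, ℂ) n‖ + ‖γ‖ * ‖q‖ ^ n := by rw [norm_mul, norm_pow]
        _ ≤ (‖f‖ + ‖γ‖) * (‖q‖ + 1) ^ n := by nlinarith [norm_nonneg γ, norm_nonneg f])
    hr
    (fun u hu => by
      have hu1 : ‖u‖ < 1 := lt_of_lt_of_le hu (min_le_left _ _)
      have hqu : ‖q * u‖ < 1 := by
        rw [norm_mul]
        have h4 : ‖u‖ ≤ (‖q‖ + 1)⁻¹ := le_of_lt (lt_of_lt_of_le hu (min_le_right _ _))
        have h5 : (0:ℝ) < ‖q‖ + 1 := by linarith [norm_nonneg q]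
        have h6 : ‖q‖ * ‖u‖ ≤ ‖q‖ * (‖q‖ + 1)⁻¹ :=
          mul_le_mul_of_nonneg_left h4 (norm_nonneg q)
        have h7 : ‖q‖ * (‖q‖ + 1)⁻¹ < 1 := by
          rw [mul_inv_lt_iff₀ h5]; linarith
        linarith
      have S1 := summable_eval f hu1
      have S2 : Summable (fun n : ℕ => γ * q ^ n * u ^ n) := by
        apply Summable.congr ((summable_geometric_of_norm_lt_one hqu).mul_left γ)
        intro n; rw [mul_pow]; ring
      have hsplit : ∑' n : ℕ, ((f : ∀ _ : ℕ, ℂ) n - γ * q ^ n) * u ^ n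
          = eval f u - ∑' n : ℕ, γ * q ^ n * u ^ n := by
        rw [eval, ← Summable.tsum_sub S1 S2]
        apply tsum_congr; intro n; ring
      rw [hsplit, h u hu1 hqu]
      have hgeo : ∑' n : ℕ, γ * q ^ n * u ^ n = γ * (1 - q * u)⁻¹ := by
        rw [← tsum_geometric_of_norm_lt_one hqu, ← tsum_mul_left]
        apply tsum_congr; intro n; rw [mul_pow]; ring
      rw [hgeo, sub_self]) n
  exact sub_eq_zero.mp (by simpa using key)

end H2


set_option maxHeartbeats 2000000 in
/-- Lemma (Jiang et al.): let `φ` be a linear fractional self-map of `𝔻` with a fixed point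
on `∂𝔻` and `ψ = K_{σ(0)}`. Then `W_{ψ,φ}` is normal on `H²` iff `|b| = |c|`. -/
theorem stmt19 (a b c d : ℂ)
    (φ : ℂ → ℂ) (hφ : ∀ z : ℂ, φ z = (a * z + b) / (c * z + d))
    (hdet : a * d - b * c ≠ 0)
    (hden : ∀ z : ℂ, ‖z‖ < 1 → c * z + d ≠ 0)
    (hself : ∀ z : ℂ, ‖z‖ < 1 → ‖φ z‖ < 1)
    (hfix : ∃ ζ : ℂ, ‖ζ‖ = 1 ∧ (a * ζ + b) / (c * ζ + d) = ζ)
    (σ : ℂ → ℂ) (hσ : ∀ z : ℂ, σ z = (conj a * z - conj c) / (-(conj b) * z + conj d))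
    (ψ : ℂ → ℂ) (hψ : ∀ z : ℂ, ψ z = H2.ker (σ 0) z)
    (W : H2 →L[ℂ] H2) (hW : H2.IsWCompOp ψ φ W) :
    H2.IsNormalOp W ↔ ‖b‖ = ‖c‖ := by
  have hd : d ≠ 0 := by simpa using hden 0 (by norm_num)
  have hdbar : conj d ≠ 0 := by simpa using hd
  have hφ0 : φ 0 = b / d := by rw [hφ]; simp
  have hbd : ‖b‖ < ‖d‖ := by
    have h0 := hself 0 (by norm_num)
    rw [hφ0, norm_div, div_lt_one (norm_pos_iff.mpr hd)] at h0
    exact h0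
  have hγden : ∀ w : ℂ, ‖w‖ < 1 → d - conj w * b ≠ 0 := by
    intro w hw h0
    have h1 : ‖conj w * b‖ < ‖d‖ := by
      rw [norm_mul, RCLike.norm_conj]
      nlinarith [norm_nonneg b, norm_nonneg w]
    rw [sub_eq_zero.mp h0] at h1
    exact lt_irrefl _ h1
  have hσ0 : σ 0 = -(conj c) / conj d := by rw [hσ]; ring_nf
  have hcσ0 : conj (σ 0) = -(c / d) := by
    rw [hσ0, map_div₀, map_neg, Complex.conj_conj, Complex.conj_conj]; ring
  have hψ' : ∀ u : ℂ, c * u + d ≠ 0 → ψ u = d / (c * u + d) := by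
    intro u hu
    have h1 : (1:ℂ) - conj (σ 0) * u = (c * u + d) / d := by
      rw [hcσ0]; field_simp; ring
    rw [hψ, H2.ker, h1, inv_div]
  -- the key structural lemma : σ maps 𝔻 to 𝔻, and W acts on kernels
  have key : ∀ w : ℂ, ‖w‖ < 1 →
      ‖σ w‖ < 1 ∧ W (H2.kernel w) = (d / (d - conj w * b)) • H2.kernel (σ w) := by
    intro w hw
    have hden2 : d - conj w * b ≠ 0 := hγden w hw
    have hγ0 : d / (d - conj w * b) ≠ 0 := div_ne_zero hd hden2
    have hσdenw : -(conj b) * w + conj d ≠ 0 := by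
      intro h0
      apply hγden w hw
      have h1 := congrArg conj h0
      simp only [map_add, map_neg, map_mul, Complex.conj_conj, map_zero] at h1
      linear_combination h1
    have h5 : σ w * (-(conj b) * w + conj d) = conj a * w - conj c := by
      rw [hσ w]; exact div_mul_cancel₀ _ hσdenw
    have h6 := congrArg conj h5
    simp only [map_mul, map_add, map_sub, map_neg, Complex.conj_conj] at h6
    have hqval : conj (σ w) * (d - conj w * b) = a * conj w - c := by
      linear_combination h6
    have hcoef : ∀ n, (W (H2.kernel w) : ∀ _ : ℕ, ℂ) n
        = (d / (d - conj w * b)) * (conj (σ w)) ^ n := by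
      apply H2.coeff_geom
      intro u hu1 hqu
      have h1 : c * u + d ≠ 0 := hden u hu1
      have hφu : ‖φ u‖ < 1 := hself u hu1
      have h2 : (1:ℂ) - conj w * φ u ≠ 0 := by
        intro h0
        have h3 : ‖conj w * φ u‖ < 1 := by
          rw [norm_mul, RCLike.norm_conj]
          nlinarith [norm_nonneg w, norm_nonneg (φ u)]
        rw [sub_eq_zero] at h0
        rw [← h0] at h3; simp at h3
      rw [hW _ u hu1, H2.eval_kernel hw hφu, hψ' u h1, hφ u]
      rw [hφ u] at h2
      have e1 : (1:ℂ) - conj w * ((a * u + b) / (c * u + d))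
          = ((c * u + d) - conj w * (a * u + b)) / (c * u + d) := by
        rw [mul_div_assoc', one_sub_div h1]
      have e2 : (1:ℂ) - conj (σ w) * u
          = ((c * u + d) - conj w * (a * u + b)) / (d - conj w * b) := by
        rw [eq_div_iff hden2]; linear_combination (-u) * hqval
      have hD : (c * u + d) - conj w * (a * u + b) ≠ 0 := by
        intro h0; apply h2; rw [e1, h0, zero_div]
      rw [e1, inv_div, e2, inv_div]
      field_simp
    have hq1 : ‖conj (σ w)‖ < 1 := by
      have hsq := H2.sq_summable (W (H2.kernel w))
      have hγn : (0:ℝ) < ‖d / (d - conj w * b)‖ := norm_pos_iff.mpr hγ0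
      have hsq2 : Summable (fun n : ℕ =>
          ‖d / (d - conj w * b)‖ ^ 2 * (‖conj (σ w)‖ ^ 2) ^ n) := by
        refine hsq.congr fun n => ?_
        rw [hcoef n, show (2:ℝ) = ((2:ℕ):ℝ) by norm_num, Real.rpow_natCast,
          norm_mul, norm_pow, mul_pow, ← pow_mul, mul_comm n 2, pow_mul]
      have hsq3 : Summable (fun n : ℕ => (‖conj (σ w)‖ ^ 2) ^ n) := by
        have h7 := hsq2.mul_left (‖d / (d - conj w * b)‖ ^ 2)⁻¹
        refine h7.congr fun n => ?_
        rw [← mul_assoc, inv_mul_cancel₀ (by positivity), one_mul]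
      have h8 := summable_geometric_iff_norm_lt_one.mp hsq3
      rw [Real.norm_of_nonneg (by positivity)] at h8
      nlinarith [norm_nonneg (conj (σ w))]
    have hσw : ‖σ w‖ < 1 := by rwa [RCLike.norm_conj] at hq1
    refine ⟨hσw, ?_⟩
    apply lp.ext
    funext n
    rw [hcoef n, lp.coeFn_smul, Pi.smul_apply, H2.kernel_coeff hσw, smul_eq_mul]
  -- adjoint on kernels
  have hAk : ∀ w : ℂ, ‖w‖ < 1 →
      ContinuousLinearMap.adjoint W (H2.kernel w) = conj (ψ w) • H2.kernel (φ w) := by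
    intro w hw
    apply ext_inner_right ℂ
    intro f
    rw [ContinuousLinearMap.adjoint_inner_left, H2.inner_kernel hw, hW f w hw,
      inner_smul_left, Complex.conj_conj, H2.inner_kernel (hself w hw)]
  constructor
  · -- forward : normal → ‖b‖ = ‖c‖
    intro hN
    unfold H2.IsNormalOp at hN
    have h0 : ‖(0:ℂ)‖ < 1 := by norm_num
    have hσ0lt := (key 0 h0).1
    have hφ0lt := hself 0 h0
    have hcd : ‖c‖ < ‖d‖ := by
      have h1 := hσ0lt
      rw [hσ0, norm_div, norm_neg, RCLike.norm_conj, RCLike.norm_conj,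
        div_lt_one (norm_pos_iff.mpr hd)] at h1
      exact h1
    have e := congrArg (fun T : H2 →L[ℂ] H2 => T (H2.kernel 0)) hN
    simp only [ContinuousLinearMap.comp_apply] at e
    rw [(key 0 h0).2, map_smul, hAk (σ 0) hσ0lt, hAk 0 h0, map_smul,
      (key (φ 0) hφ0lt).2] at e
    have e0 := congrArg (fun g : H2 => (g : ∀ _ : ℕ, ℂ) 0) e
    simp only [lp.coeFn_smul, Pi.smul_apply, smul_eq_mul] at e0
    rw [H2.kernel_coeff (hself (σ 0) hσ0lt), H2.kernel_coeff ((key (φ 0) hφ0lt).1)] at e0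
    simp only [pow_zero, mul_one] at e0
    have hψ0 : ψ 0 = 1 := by
      rw [hψ' 0 (by simpa using hd)]; simp [hd]
    have hγ00 : d / (d - conj (0:ℂ) * b) = 1 := by simp [hd]
    have hcσd0 : c * σ 0 + d ≠ 0 := hden (σ 0) hσ0lt
    rw [hγ00, hψ0, one_mul, map_one, one_mul, hψ' (σ 0) hcσd0, hσ0, hφ0] at e0
    have h1 : c * (-(conj c) / conj d) + d = (d * conj d - c * conj c) / conj d := by
      field_simp; ring
    have h2 : d - conj (b / d) * b = (d * conj d - b * conj b) / conj d := by
      rw [map_div₀]; field_simp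
    have hne1 : d * conj d - c * conj c ≠ 0 := by
      rw [mul_conj_norm', mul_conj_norm', ← Complex.ofReal_sub]
      exact Complex.ofReal_ne_zero.mpr (by nlinarith [norm_nonneg c, norm_nonneg d])
    have hne2 : d * conj d - b * conj b ≠ 0 := by
      rw [mul_conj_norm', mul_conj_norm', ← Complex.ofReal_sub]
      exact Complex.ofReal_ne_zero.mpr (by nlinarith [norm_nonneg b, norm_nonneg d])
    rw [h1, h2, div_div_eq_mul_div, div_div_eq_mul_div, map_div₀, map_mul, map_sub,
      map_mul, map_mul, Complex.conj_conj, Complex.conj_conj] at e0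
    have hne1' : conj d * d - conj c * c ≠ 0 := by
      intro h3; apply hne1; linear_combination h3
    rw [div_eq_div_iff hne1' hne2] at e0
    have e1 : (d * conj d) * (b * conj b) = (d * conj d) * (c * conj c) := by
      linear_combination (-1 : ℂ) * e0
    have e2 := mul_left_cancel₀ (mul_ne_zero hd hdbar) e1
    rw [mul_conj_norm', mul_conj_norm'] at e2
    have e3 : (‖b‖ ^ 2 : ℝ) = ‖c‖ ^ 2 := by exact_mod_cast e2
    nlinarith [norm_nonneg b, norm_nonneg c]
  · -- backward : ‖b‖ = ‖c‖ → normal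
    intro hbc
    have hbb : b * conj b = c * conj c := by
      rw [mul_conj_norm', mul_conj_norm', hbc]
    obtain ⟨ζ, hζ1, hζfix⟩ := hfix
    have hζden : c * ζ + d ≠ 0 := by
      intro h0
      rw [h0, div_zero] at hζfix
      rw [← hζfix] at hζ1
      simp at hζ1
    have hζq : a * ζ + b = ζ * (c * ζ + d) := by
      rw [div_eq_iff hζden] at hζfix
      linear_combination hζfix
    have hζu : ζ * conj ζ = 1 := by
      rw [mul_conj_norm', hζ1]; norm_num
    have hE := algE' a b c d ζ hζu hζq hbb
    have hE' : c * (conj d - conj a) + conj b * (d - a) = 0 := by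
      have h0 := congrArg conj hE
      simp only [map_add, map_mul, map_sub, map_zero, Complex.conj_conj] at h0
      linear_combination -h0
    unfold H2.IsNormalOp
    apply ContinuousLinearMap.ext
    intro f
    apply H2.ext_eval
    intro w hw
    simp only [ContinuousLinearMap.comp_apply]
    have hσw := (key w hw).1
    have hφw := hself w hw
    have hσφw := (key (φ w) hφw).1
    have hφσw := hself (σ w) hσw
    have hcwd : c * w + d ≠ 0 := hden w hw
    have hcσd : c * σ w + d ≠ 0 := hden (σ w) hσw
    have hσden : -(conj b) * w + conj d ≠ 0 := by
      intro h0
      apply hγden w hw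
      have h1 := congrArg conj h0
      simp only [map_add, map_neg, map_mul, Complex.conj_conj, map_zero] at h1
      linear_combination h1
    have hbφ : -(conj b) * φ w + conj d ≠ 0 := by
      intro h0
      apply hγden (φ w) hφw
      have h1 := congrArg conj h0
      simp only [map_add, map_neg, map_mul, Complex.conj_conj, map_zero] at h1
      linear_combination h1
    have h5' : σ w * (-(conj b) * w + conj d) = conj a * w - conj c := by
      rw [hσ w]; exact div_mul_cancel₀ _ hσden
    have h7 : φ w * (c * w + d) = a * w + b := by
      rw [hφ w]; exact div_mul_cancel₀ _ hcwd
    have hB2eq : (conj d * c - conj b * a) * w + (conj d * d - conj b * b)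
        = (-(conj b) * φ w + conj d) * (c * w + d) := by
      linear_combination (conj b) * h7
    have hA2eq : (c * conj a - d * conj b) * w + (d * conj d - c * conj c)
        = (c * σ w + d) * (-(conj b) * w + conj d) := by
      linear_combination (-c) * h5'
    have hB2ne : (conj d * c - conj b * a) * w + (conj d * d - conj b * b) ≠ 0 := by
      rw [hB2eq]; exact mul_ne_zero hbφ hcwd
    have hA2ne : (c * conj a - d * conj b) * w + (d * conj d - c * conj c) ≠ 0 := by
      rw [hA2eq]; exact mul_ne_zero hcσd hσden
    have hAB : (c * conj a - d * conj b) * w + (d * conj d - c * conj c)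
        = (conj d * c - conj b * a) * w + (conj d * d - conj b * b) := by
      linear_combination (-w) * hE' + hbb
    have hL : σ (φ w) = ((conj a * a - conj c * c) * w + (conj a * b - conj c * d)) /
        ((conj d * c - conj b * a) * w + (conj d * d - conj b * b)) := by
      rw [hσ (φ w), div_eq_div_iff hbφ hB2ne]
      linear_combination (conj a * φ w - conj c) * hB2eq
        + (-(conj b) * φ w + conj d) * (conj a) * h7
    have hR : φ (σ w) = ((a * conj a - b * conj b) * w + (b * conj d - a * conj c)) /
        ((c * conj a - d * conj b) * w + (d * conj d - c * conj c)) := by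
      rw [hφ (σ w), div_eq_div_iff hcσd hA2ne]
      linear_combination (a * σ w + b) * hA2eq + (c * σ w + d) * a * h5'
    have hU12 : (a * conj a - b * conj b) * w + (b * conj d - a * conj c)
        = (conj a * a - conj c * c) * w + (conj a * b - conj c * d) := by
      linear_combination (-w) * hbb - hE
    have hP : φ (σ w) = σ (φ w) := by rw [hR, hL, hU12, hAB]
    have hDen : (conj d - w * conj b) * (c * σ w + d)
        = (c * w + d) * (conj d - φ w * conj b) := by
      calc (conj d - w * conj b) * (c * σ w + d)
          = (c * σ w + d) * (-(conj b) * w + conj d) := by ring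
        _ = (c * conj a - d * conj b) * w + (d * conj d - c * conj c) := hA2eq.symm
        _ = (conj d * c - conj b * a) * w + (conj d * d - conj b * b) := hAB
        _ = (-(conj b) * φ w + conj d) * (c * w + d) := hB2eq
        _ = (c * w + d) * (conj d - φ w * conj b) := by ring
    have hS : conj (d / (d - conj w * b)) * ψ (σ w)
        = ψ w * conj (d / (d - conj (φ w) * b)) := by
      rw [hψ' (σ w) hcσd, hψ' w hcwd]
      simp only [map_div₀, map_sub, map_mul, Complex.conj_conj]
      rw [div_mul_div_comm, div_mul_div_comm, hDen]
      ring
    have e1 : H2.eval (ContinuousLinearMap.adjoint W (W f)) w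
        = conj (d / (d - conj w * b)) * (ψ (σ w) * H2.eval f (φ (σ w))) := by
      rw [H2.eval_eq_inner hw, ContinuousLinearMap.adjoint_inner_right, (key w hw).2,
        inner_smul_left, H2.inner_kernel hσw, hW f (σ w) hσw]
    have e2 : H2.eval (W (ContinuousLinearMap.adjoint W f)) w
        = ψ w * (conj (d / (d - conj (φ w) * b)) * H2.eval f (σ (φ w))) := by
      rw [hW _ w hw, H2.eval_eq_inner hφw, ContinuousLinearMap.adjoint_inner_right,
        (key (φ w) hφw).2, inner_smul_left, H2.inner_kernel hσφw]
    rw [e1, e2, hP]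
    linear_combination H2.eval f (σ (φ w)) * hS
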